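/- In the quadratic-loss SGD model, the expected one-step change of the Pflug statistic conditional on the current iterate satisfies, for every θ ∈ ℝ^p, Δ(θ) := E[∇ℓ_{n+1}ᵀ∇ℓ_n | θ_{n−1} = θ] = (θ − θ*)ᵀ(V² − γ M)(θ − θ*) − γ σ² E[(x_2ᵀx_1)²], where V = E[x xᵀ] and M = E[x xᵀ V x xᵀ]; moreover M is positive semidefinite. -/

import Mathlib

open MeasureTheory Matrix

private lemma int_of_int_sq {α : Type*} {m : MeasurableSpace α} {μ : Measure α}
    [IsFiniteMeasure μ] {f : α → ℝ} (hm : AEStronglyMeasurable f μ)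
    (h2 : Integrable (fun a => f a * f a) μ) : Integrable f μ := by
  refine (h2.add (integrable_const 1)).mono' hm (Filter.Eventually.of_forall fun a => ?_)
  have : |f a| ≤ f a * f a + 1 := by
    rcases abs_cases (f a) with ⟨h, _⟩ | ⟨h, _⟩ <;> nlinarith [abs_nonneg (f a)]
  simpa [Real.norm_eq_abs] using this

private lemma dot_mul_dot {p : ℕ} (a b x : Fin p → ℝ) :
    (x ⬝ᵥ a) * (x ⬝ᵥ b) = ∑ i, ∑ j, (a i * b j) * (x i * x j) := by
  simp only [dotProduct, Finset.sum_mul_sum]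
  exact Finset.sum_congr rfl fun i _ => Finset.sum_congr rfl fun j _ => by ring

theorem pflug_expected_increment_quadratic
    (p : ℕ) (μx : Measure (Fin p → ℝ)) (με : Measure ℝ)
    [IsProbabilityMeasure μx] [IsProbabilityMeasure με]
    (θstar : Fin p → ℝ) (γ σ2 : ℝ) (hγ : 0 < γ)
    (hmean : ∫ e, e ∂με = 0) (hvar : ∫ e, e ^ 2 ∂με = σ2)
    (hεint : Integrable (fun e : ℝ => e ^ 2) με)
    (hfourth : ∀ i j k l : Fin p,
      Integrable (fun x : Fin p → ℝ => x i * x j * x k * x l) μx)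
    (V M : Matrix (Fin p) (Fin p) ℝ)
    (hV : ∀ i j, V i j = ∫ x, x i * x j ∂μx)
    (hM : ∀ i j, M i j = ∫ x, x i * x j * (x ⬝ᵥ (V *ᵥ x)) ∂μx)
    -- gradient of the quadratic loss: ∇ℓ = -(y - xᵀθ) x with y = xᵀθ* + e
    (g : (Fin p → ℝ) → (Fin p → ℝ) → ℝ → Fin p → ℝ)
    (hg : ∀ θ x e, g θ x e = -(((x ⬝ᵥ θstar + e) - x ⬝ᵥ θ) • x))
    -- Δ(θ) = E[∇ℓ_{n+1}ᵀ∇ℓ_n | θ_{n-1} = θ], with θ_n = θ - γ ∇ℓ_n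
    (Δ : (Fin p → ℝ) → ℝ)
    (hΔ : ∀ θ, Δ θ = ∫ x₁, ∫ e₁, ∫ x₂, ∫ e₂,
      g (θ - γ • g θ x₁ e₁) x₂ e₂ ⬝ᵥ g θ x₁ e₁ ∂με ∂μx ∂με ∂μx) :
    (∀ θ : Fin p → ℝ,
      Δ θ = (θ - θstar) ⬝ᵥ ((V * V - γ • M) *ᵥ (θ - θstar))
            - γ * σ2 * ∫ x₁, ∫ x₂, (x₂ ⬝ᵥ x₁) ^ 2 ∂μx ∂μx) ∧
    M.PosSemidef := by
  -- basic integrability facts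
  have hε1 : Integrable (fun e : ℝ => e) με := by
    refine int_of_int_sq aestronglyMeasurable_id ?_
    simpa [sq] using hεint
  have hx2 : ∀ i j : Fin p, Integrable (fun x : Fin p → ℝ => x i * x j) μx := by
    intro i j
    refine int_of_int_sq (((measurable_pi_apply i).mul
      (measurable_pi_apply j)).aestronglyMeasurable) ?_
    have := hfourth i j i j
    refine this.congr (Filter.Eventually.of_forall fun x => by ring)
  -- the symmetric matrix V
  have hVsymm : ∀ i j, V i j = V j i := by
    intro i j; rw [hV, hV]
    exact integral_congr_ae (Filter.Eventually.of_forall fun x => by ring)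
  -- quadratic expectation
  have hE2 : ∀ a b : Fin p → ℝ, ∫ x, (x ⬝ᵥ a) * (x ⬝ᵥ b) ∂μx = a ⬝ᵥ (V *ᵥ b) := by
    intro a b
    rw [show (fun x : Fin p → ℝ => (x ⬝ᵥ a) * (x ⬝ᵥ b))
        = fun x => ∑ i, ∑ j, (a i * b j) * (x i * x j) from funext fun x => dot_mul_dot a b x]
    rw [integral_finset_sum _ fun i _ =>
      integrable_finset_sum _ fun j _ => (hx2 i j).const_mul _]
    rw [Finset.sum_congr rfl fun i _ => integral_finset_sum _ fun j _ => (hx2 i j).const_mul _]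
    simp only [integral_const_mul]
    simp only [dotProduct, mulVec, Finset.mul_sum]
    exact Finset.sum_congr rfl fun i _ => Finset.sum_congr rfl fun j _ => by
      rw [← hV]; ring
  have hI2 : ∀ a b : Fin p → ℝ, Integrable (fun x => (x ⬝ᵥ a) * (x ⬝ᵥ b)) μx := by
    intro a b
    rw [show (fun x : Fin p → ℝ => (x ⬝ᵥ a) * (x ⬝ᵥ b))
        = fun x => ∑ i, ∑ j, (a i * b j) * (x i * x j) from funext fun x => dot_mul_dot a b x]
    exact integrable_finset_sum _ fun i _ =>
      integrable_finset_sum _ fun j _ => (hx2 i j).const_mul _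
  -- quartic-type integrability and expectation
  have hq : ∀ (i j : Fin p) (x : Fin p → ℝ),
      x i * x j * (x ⬝ᵥ V *ᵥ x) = ∑ k, ∑ l, V k l * (x i * x j * x k * x l) := by
    intro i j x
    simp only [dotProduct, mulVec, Finset.mul_sum]
    exact Finset.sum_congr rfl fun k _ => Finset.sum_congr rfl fun l _ => by ring
  have hx2q : ∀ i j : Fin p,
      Integrable (fun x : Fin p → ℝ => x i * x j * (x ⬝ᵥ V *ᵥ x)) μx := by
    intro i j
    rw [show (fun x : Fin p → ℝ => x i * x j * (x ⬝ᵥ V *ᵥ x))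
        = fun x => ∑ k, ∑ l, V k l * (x i * x j * x k * x l) from funext fun x => hq i j x]
    exact integrable_finset_sum _ fun k _ =>
      integrable_finset_sum _ fun l _ => (hfourth i j k l).const_mul _
  have hquartic : ∀ u : Fin p → ℝ,
      ∫ x, (x ⬝ᵥ u) ^ 2 * (x ⬝ᵥ V *ᵥ x) ∂μx = u ⬝ᵥ (M *ᵥ u) := by
    intro u
    have hpt : ∀ x : Fin p → ℝ, (x ⬝ᵥ u) ^ 2 * (x ⬝ᵥ V *ᵥ x)
        = ∑ i, ∑ j, (u i * u j) * (x i * x j * (x ⬝ᵥ V *ᵥ x)) := by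
      intro x
      rw [sq, dot_mul_dot, Finset.sum_mul]
      exact Finset.sum_congr rfl fun i _ => by
        rw [Finset.sum_mul]
        exact Finset.sum_congr rfl fun j _ => by ring
    rw [show (fun x : Fin p → ℝ => (x ⬝ᵥ u) ^ 2 * (x ⬝ᵥ V *ᵥ x))
        = fun x => ∑ i, ∑ j, (u i * u j) * (x i * x j * (x ⬝ᵥ V *ᵥ x))
        from funext hpt]
    rw [integral_finset_sum _ fun i _ =>
      integrable_finset_sum _ fun j _ => (hx2q i j).const_mul _]
    rw [Finset.sum_congr rfl fun i _ =>
      integral_finset_sum _ fun j _ => (hx2q i j).const_mul _]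
    simp only [integral_const_mul, ← hM]
    simp only [dotProduct, mulVec, Finset.mul_sum]
    exact Finset.sum_congr rfl fun i _ => Finset.sum_congr rfl fun j _ => by ring
  have hquarticInt : ∀ u : Fin p → ℝ,
      Integrable (fun x => (x ⬝ᵥ u) ^ 2 * (x ⬝ᵥ V *ᵥ x)) μx := by
    intro u
    have hpt : ∀ x : Fin p → ℝ, (x ⬝ᵥ u) ^ 2 * (x ⬝ᵥ V *ᵥ x)
        = ∑ i, ∑ j, (u i * u j) * (x i * x j * (x ⬝ᵥ V *ᵥ x)) := by
      intro x
      rw [sq, dot_mul_dot, Finset.sum_mul]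
      exact Finset.sum_congr rfl fun i _ => by
        rw [Finset.sum_mul]
        exact Finset.sum_congr rfl fun j _ => by ring
    rw [show (fun x : Fin p → ℝ => (x ⬝ᵥ u) ^ 2 * (x ⬝ᵥ V *ᵥ x))
        = fun x => ∑ i, ∑ j, (u i * u j) * (x i * x j * (x ⬝ᵥ V *ᵥ x))
        from funext hpt]
    exact integrable_finset_sum _ fun i _ =>
      integrable_finset_sum _ fun j _ => (hx2q i j).const_mul _
  -- nonnegativity of the quadratic form x ↦ xᵀ V x
  have hVx : ∀ x : Fin p → ℝ, 0 ≤ x ⬝ᵥ V *ᵥ x := by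
    intro x
    rw [← hE2 x x]
    exact integral_nonneg fun x' => mul_self_nonneg _
  -- gradient formula
  have hG : ∀ (θ' x : Fin p → ℝ) (e : ℝ), g θ' x e = (x ⬝ᵥ (θ' - θstar) - e) • x := by
    intro θ' x e
    rw [hg, ← neg_smul]
    congr 1
    rw [dotProduct_sub]; ring
  constructor
  · intro θ
    set d : Fin p → ℝ := θ - θstar with hd
    -- Step A: innermost integral over e₂
    have hA : ∀ (x₁ : Fin p → ℝ) (e₁ : ℝ) (x₂ : Fin p → ℝ),
        (∫ e₂, g (θ - γ • g θ x₁ e₁) x₂ e₂ ⬝ᵥ g θ x₁ e₁ ∂με)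
        = ((x₂ ⬝ᵥ d) - γ * (x₁ ⬝ᵥ d - e₁) * (x₂ ⬝ᵥ x₁))
            * ((x₁ ⬝ᵥ d - e₁) * (x₂ ⬝ᵥ x₁)) := by
      intro x₁ e₁ x₂
      have h1 : ∀ e₂ : ℝ, g (θ - γ • g θ x₁ e₁) x₂ e₂ ⬝ᵥ g θ x₁ e₁
          = ((x₂ ⬝ᵥ d) - γ * (x₁ ⬝ᵥ d - e₁) * (x₂ ⬝ᵥ x₁))
              * ((x₁ ⬝ᵥ d - e₁) * (x₂ ⬝ᵥ x₁))
            - e₂ * ((x₁ ⬝ᵥ d - e₁) * (x₂ ⬝ᵥ x₁)) := by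
        intro e₂
        rw [hG θ x₁ e₁, hG]
        have hθ' : θ - γ • ((x₁ ⬝ᵥ (θ - θstar) - e₁) • x₁) - θstar
            = d - (γ * (x₁ ⬝ᵥ d - e₁)) • x₁ := by
          rw [smul_smul, hd, sub_right_comm]
        rw [hθ', smul_dotProduct, dotProduct_smul, smul_eq_mul, smul_eq_mul,
          dotProduct_sub, dotProduct_smul, smul_eq_mul]
        ring
      simp only [h1]
      rw [integral_sub (integrable_const _) (hε1.mul_const _),
        integral_const, integral_mul_const, hmean]
      simp
    -- Step B: integral over x₂
    have hB : ∀ (x₁ : Fin p → ℝ) (e₁ : ℝ),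
        (∫ x₂, ((x₂ ⬝ᵥ d) - γ * (x₁ ⬝ᵥ d - e₁) * (x₂ ⬝ᵥ x₁))
            * ((x₁ ⬝ᵥ d - e₁) * (x₂ ⬝ᵥ x₁)) ∂μx)
        = (x₁ ⬝ᵥ d - e₁) * (d ⬝ᵥ (V *ᵥ x₁))
          - γ * (x₁ ⬝ᵥ d - e₁) ^ 2 * (x₁ ⬝ᵥ (V *ᵥ x₁)) := by
      intro x₁ e₁
      have h2 : ∀ x₂ : Fin p → ℝ,
          ((x₂ ⬝ᵥ d) - γ * (x₁ ⬝ᵥ d - e₁) * (x₂ ⬝ᵥ x₁))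
            * ((x₁ ⬝ᵥ d - e₁) * (x₂ ⬝ᵥ x₁))
          = (x₁ ⬝ᵥ d - e₁) * ((x₂ ⬝ᵥ d) * (x₂ ⬝ᵥ x₁))
            - (γ * (x₁ ⬝ᵥ d - e₁) ^ 2) * ((x₂ ⬝ᵥ x₁) * (x₂ ⬝ᵥ x₁)) := by
        intro x₂; ring
      simp only [h2]
      rw [integral_sub ((hI2 d x₁).const_mul _) ((hI2 x₁ x₁).const_mul _),
        integral_const_mul, integral_const_mul, hE2 d x₁, hE2 x₁ x₁]
    -- Step C: integral over e₁
    have hC : ∀ x₁ : Fin p → ℝ,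
        (∫ e₁, ((x₁ ⬝ᵥ d - e₁) * (d ⬝ᵥ (V *ᵥ x₁))
          - γ * (x₁ ⬝ᵥ d - e₁) ^ 2 * (x₁ ⬝ᵥ (V *ᵥ x₁))) ∂με)
        = (x₁ ⬝ᵥ d) * (d ⬝ᵥ (V *ᵥ x₁))
          - γ * ((x₁ ⬝ᵥ d) ^ 2 + σ2) * (x₁ ⬝ᵥ (V *ᵥ x₁)) := by
      intro x₁
      set c := x₁ ⬝ᵥ d
      set K1 := d ⬝ᵥ (V *ᵥ x₁)
      set K2 := x₁ ⬝ᵥ (V *ᵥ x₁)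
      have h3 : ∀ e₁ : ℝ,
          (c - e₁) * K1 - γ * (c - e₁) ^ 2 * K2
          = (c * K1 - γ * c ^ 2 * K2)
            + e₁ * (2 * γ * c * K2 - K1) + e₁ ^ 2 * (-(γ * K2)) := by
        intro e₁; ring
      simp only [h3]
      have i1 : Integrable (fun e₁ : ℝ =>
          (c * K1 - γ * c ^ 2 * K2) + e₁ * (2 * γ * c * K2 - K1)) με :=
        (integrable_const _).add (hε1.mul_const _)
      have i2 : Integrable (fun e₁ : ℝ => e₁ ^ 2 * (-(γ * K2))) με :=
        hεint.mul_const _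
      rw [integral_add i1 i2,
        integral_add (integrable_const _) (hε1.mul_const _),
        integral_const, integral_mul_const, integral_mul_const, hmean, hvar]
      simp only [measure_univ, probReal_univ, ENNReal.toReal_one, smul_eq_mul, one_mul, zero_mul, add_zero]
      ring
    -- Step D: the outer integral over x₁, piece by piece
    have hD1 : ∫ x₁, (x₁ ⬝ᵥ d) * (d ⬝ᵥ (V *ᵥ x₁)) ∂μx = d ⬝ᵥ (V *ᵥ (V *ᵥ d)) := by
      have hw : ∀ x₁ : Fin p → ℝ, d ⬝ᵥ (V *ᵥ x₁) = x₁ ⬝ᵥ (V *ᵥ d) := by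
        intro x₁
        rw [dotProduct_mulVec, dotProduct_comm]
        congr 1
        funext j
        simp only [vecMul, mulVec, dotProduct]
        exact Finset.sum_congr rfl fun i _ => by rw [hVsymm j i]; ring
      simp only [hw]
      rw [hE2 d (V *ᵥ d)]
      exact hw (V *ᵥ d)
    have hD3 : ∫ x₁, (x₁ ⬝ᵥ (V *ᵥ x₁)) ∂μx = ∑ i, ∑ j, V i j * V i j := by
      have hpt : ∀ x : Fin p → ℝ,
          x ⬝ᵥ (V *ᵥ x) = ∑ i, ∑ j, (V i j) * (x i * x j) := by
        intro x
        simp only [dotProduct, mulVec, Finset.mul_sum]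
        exact Finset.sum_congr rfl fun i _ => Finset.sum_congr rfl fun j _ => by ring
      rw [show (fun x : Fin p → ℝ => x ⬝ᵥ (V *ᵥ x))
          = fun x => ∑ i, ∑ j, (V i j) * (x i * x j) from funext hpt]
      rw [integral_finset_sum (f := fun i (x : Fin p → ℝ) => ∑ j, (V i j) * (x i * x j)) _
        fun i _ => integrable_finset_sum _ fun j _ => (hx2 i j).const_mul (V i j)]
      rw [Finset.sum_congr rfl fun i _ =>
        integral_finset_sum (f := fun j (x : Fin p → ℝ) => (V i j) * (x i * x j)) _
          fun j _ => (hx2 i j).const_mul (V i j)]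
      simp only [integral_const_mul]
      exact Finset.sum_congr rfl fun i _ => Finset.sum_congr rfl fun j _ => by rw [← hV]
    -- the double integral on the right-hand side
    have hT : ∫ x₁, ∫ x₂, (x₂ ⬝ᵥ x₁) ^ 2 ∂μx ∂μx = ∑ i, ∑ j, V i j * V i j := by
      have hin : ∀ x₁ : Fin p → ℝ, ∫ x₂, (x₂ ⬝ᵥ x₁) ^ 2 ∂μx = x₁ ⬝ᵥ (V *ᵥ x₁) := by
        intro x₁
        rw [show (fun x₂ : Fin p → ℝ => (x₂ ⬝ᵥ x₁) ^ 2)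
            = fun x₂ => (x₂ ⬝ᵥ x₁) * (x₂ ⬝ᵥ x₁) from funext fun x₂ => sq (x₂ ⬝ᵥ x₁)]
        exact hE2 x₁ x₁
      simp only [hin]
      exact hD3
    -- put everything together
    rw [hΔ θ]
    simp only [hA, hB, hC]
    have hsplit : ∀ x₁ : Fin p → ℝ,
        (x₁ ⬝ᵥ d) * (d ⬝ᵥ (V *ᵥ x₁)) - γ * ((x₁ ⬝ᵥ d) ^ 2 + σ2) * (x₁ ⬝ᵥ (V *ᵥ x₁))
        = (x₁ ⬝ᵥ d) * (d ⬝ᵥ (V *ᵥ x₁))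
          - γ * ((x₁ ⬝ᵥ d) ^ 2 * (x₁ ⬝ᵥ V *ᵥ x₁))
          - (γ * σ2) * (x₁ ⬝ᵥ (V *ᵥ x₁)) := by
      intro x₁; ring
    simp only [hsplit]
    have hIK1 : Integrable (fun x₁ => (x₁ ⬝ᵥ d) * (d ⬝ᵥ (V *ᵥ x₁))) μx := by
      have hw : ∀ x₁ : Fin p → ℝ, d ⬝ᵥ (V *ᵥ x₁) = x₁ ⬝ᵥ (V *ᵥ d) := by
        intro x₁
        rw [dotProduct_mulVec, dotProduct_comm]
        congr 1
        funext j
        simp only [vecMul, mulVec, dotProduct]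
        exact Finset.sum_congr rfl fun i _ => by rw [hVsymm j i]; ring
      simp only [hw]
      exact hI2 d (V *ᵥ d)
    have hIK2 : Integrable (fun x₁ : Fin p → ℝ => x₁ ⬝ᵥ (V *ᵥ x₁)) μx := by
      have hpt : (fun x : Fin p → ℝ => x ⬝ᵥ (V *ᵥ x))
          = fun x => ∑ i, ∑ j, (V i j) * (x i * x j) := by
        funext x
        simp only [dotProduct, mulVec, Finset.mul_sum]
        exact Finset.sum_congr rfl fun i _ => Finset.sum_congr rfl fun j _ => by ring
      rw [hpt]
      exact integrable_finset_sum _ fun i _ =>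
        integrable_finset_sum _ fun j _ => (hx2 i j).const_mul _
    have j1 : Integrable (fun x₁ : Fin p → ℝ =>
        x₁ ⬝ᵥ d * (d ⬝ᵥ V *ᵥ x₁) - γ * ((x₁ ⬝ᵥ d) ^ 2 * (x₁ ⬝ᵥ V *ᵥ x₁))) μx :=
      hIK1.sub ((hquarticInt d).const_mul γ)
    have j2 : Integrable (fun x₁ : Fin p → ℝ => γ * σ2 * (x₁ ⬝ᵥ V *ᵥ x₁)) μx :=
      hIK2.const_mul _
    rw [integral_sub j1 j2,
      integral_sub hIK1 ((hquarticInt d).const_mul γ),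
      integral_const_mul, integral_const_mul, hD1, hquartic d, hD3, hT]
    rw [sub_mulVec, dotProduct_sub, smul_mulVec, dotProduct_smul,
      ← mulVec_mulVec, smul_eq_mul]
  · rw [posSemidef_iff_dotProduct_mulVec]
    constructor
    · ext i j
      rw [Matrix.conjTranspose_apply, hM, hM]
      simp only [star_trivial]
      exact integral_congr_ae (Filter.Eventually.of_forall fun x => by ring)
    · intro v
      simp only [star_trivial]
      rw [← hquartic v]
      exact integral_nonneg fun x => mul_nonneg (sq_nonneg _) (hVx x)
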